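/- If the signed graph (H,γ_H) is a signed graph minor of (G,γ_G), then tOCP-tw(H,γ_H) ≤ tOCP-tw(G,γ_G). -/

import Mathlib

namespace TDMPaper

/-- A finite multigraph without loops: edges carry their unordered pair of endpoints. -/
structure MGraph where
  V : Type
  E : Type
  finV : Finite V
  finE : Finite E
  ends : E → Sym2 V
  loopless : ∀ e, ¬ (ends e).IsDiag

attribute [instance] MGraph.finV MGraph.finE

namespace MGraph

/-- A cycle in a multigraph, given by cyclically ordered distinct vertices and
distinct edges. -/
structure Cycle (G : MGraph) where
  n : ℕ
  npos : 0 < n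
  vtx : Fin n → G.V
  edge : Fin n → G.E
  vtx_inj : Function.Injective vtx
  edge_inj : Function.Injective edge
  ends_eq : ∀ i : Fin n,
    G.ends (edge i) = s(vtx i, vtx ⟨(i.1 + 1) % n, Nat.mod_lt _ npos⟩)

/-- The parity of a cycle with respect to a signing `γ`. -/
def Cycle.parity {G : MGraph} (C : G.Cycle) (γ : G.E → ZMod 2) : ZMod 2 :=
  ∑ i, γ (C.edge i)

/-- The vertex set of a cycle. -/
def Cycle.support {G : MGraph} (C : G.Cycle) : Set G.V := Set.range C.vtx

/-- The odd cycle packing number of a signed graph: the maximum number of pairwise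
vertex-disjoint odd cycles. -/
noncomputable def OCP (G : MGraph) (γ : G.E → ZMod 2) : ℕ :=
  sSup {k : ℕ | ∃ C : Fin k → G.Cycle,
    (∀ i, (C i).parity γ = 1) ∧
    ∀ i j, i ≠ j → Disjoint ((C i).support) ((C j).support)}

/-- The subgraph induced by a vertex set `S` (kept on the same vertex type; only
edges with both endpoints in `S` survive). -/
def induce (G : MGraph) (S : Set G.V) : MGraph where
  V := G.V
  E := {e : G.E // ∀ v ∈ G.ends e, v ∈ S}
  finV := G.finV
  finE := inferInstance
  ends := fun e => G.ends e.1
  loopless := fun e => G.loopless e.1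

/-- The odd cycle packing number of the subgraph induced on `S`, signs inherited. -/
noncomputable def OCPOn (G : MGraph) (γ : G.E → ZMod 2) (S : Set G.V) : ℕ :=
  (G.induce S).OCP (fun e => γ e.1)

/-- A path in a multigraph. -/
structure Path (G : MGraph) where
  n : ℕ
  vtx : Fin (n + 1) → G.V
  edge : Fin n → G.E
  vtx_inj : Function.Injective vtx
  ends_eq : ∀ i : Fin n, G.ends (edge i) = s(vtx i.castSucc, vtx i.succ)

def Path.first {G : MGraph} (P : G.Path) : G.V := P.vtx 0
def Path.last {G : MGraph} (P : G.Path) : G.V := P.vtx (Fin.last P.n)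
def Path.support {G : MGraph} (P : G.Path) : Set G.V := Set.range P.vtx
def Path.internals {G : MGraph} (P : G.Path) : Set G.V :=
  P.support \ {P.first, P.last}
def Path.parity {G : MGraph} (P : G.Path) (γ : G.E → ZMod 2) : ZMod 2 :=
  ∑ i, γ (P.edge i)

end MGraph

open MGraph

/-- `γ'` is obtained from `γ` by a sequence of shiftings at vertices. -/
def IsShift (G : MGraph) (γ γ' : G.E → ZMod 2) : Prop :=
  ∃ σ : G.V → ZMod 2, ∀ e u v, G.ends e = s(u, v) → γ' e = γ e + σ u + σ v

/-- A minor model of `H` in `G`: disjoint nonempty connected branch sets and an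
injective assignment of edges. -/
structure MinorModel (H G : MGraph) where
  bs : H.V → Set G.V
  em : H.E → G.E
  bs_nonempty : ∀ v, (bs v).Nonempty
  bs_disjoint : ∀ u v, u ≠ v → Disjoint (bs u) (bs v)
  bs_connected : ∀ v, ∀ a ∈ bs v, ∀ b ∈ bs v,
    Relation.ReflTransGen
      (fun x y => x ∈ bs v ∧ y ∈ bs v ∧ ∃ e, G.ends e = s(x, y)) a b
  em_inj : Function.Injective em
  em_ends : ∀ eH u v, H.ends eH = s(u, v) →
    ∃ a ∈ bs u, ∃ b ∈ bs v, G.ends (em eH) = s(a, b)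

/-- `H` is a minor of `G`. -/
def IsMinor (H G : MGraph) : Prop := Nonempty (MinorModel H G)

/-- `(H,KH)` is a rooted minor of `(G,KG)`: there is a minor model in which the
branch set of every root of `H` contains a root of `G`. -/
def IsRootedMinor (H : MGraph) (KH : Set H.V) (G : MGraph) (KG : Set G.V) : Prop :=
  ∃ M : MinorModel H G, ∀ v ∈ KH, (M.bs v ∩ KG).Nonempty

/-- A signed minor model of `(H,γH)` in `(G,γG)`: after shifting, branch sets are
connected through even edges and edges of `H` get edges of `G` of the correct sign. -/
structure SignedMinorModel (H G : MGraph) (γH : H.E → ZMod 2) (γG : G.E → ZMod 2) where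
  γ' : G.E → ZMod 2
  shift : IsShift G γG γ'
  bs : H.V → Set G.V
  em : H.E → G.E
  bs_nonempty : ∀ v, (bs v).Nonempty
  bs_disjoint : ∀ u v, u ≠ v → Disjoint (bs u) (bs v)
  bs_connected : ∀ v, ∀ a ∈ bs v, ∀ b ∈ bs v,
    Relation.ReflTransGen
      (fun x y => x ∈ bs v ∧ y ∈ bs v ∧ ∃ e, γ' e = 0 ∧ G.ends e = s(x, y)) a b
  em_inj : Function.Injective em
  em_ends : ∀ eH u v, H.ends eH = s(u, v) →
    ∃ a ∈ bs u, ∃ b ∈ bs v, G.ends (em eH) = s(a, b)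
  em_parity : ∀ eH, γ' (em eH) = γH eH

/-- `(H,γH)` is a signed graph minor of `(G,γG)`. -/
def IsSignedMinor (H : MGraph) (γH : H.E → ZMod 2) (G : MGraph)
    (γG : G.E → ZMod 2) : Prop :=
  Nonempty (SignedMinorModel H G γH γG)

/-- `(H,γH,KH)` is a rooted signed graph minor of `(G,γG,KG)`. -/
def IsRootedSignedMinor (H : MGraph) (γH : H.E → ZMod 2) (KH : Set H.V)
    (G : MGraph) (γG : G.E → ZMod 2) (KG : Set G.V) : Prop :=
  ∃ M : SignedMinorModel H G γH γG, ∀ v ∈ KH, (M.bs v ∩ KG).Nonempty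

/-- An odd minor model of `H` in `G`: a minor model together with a 2-colouring of
`G` which is proper on each branch set (branch sets are connected through
bichromatic edges) and for which every model edge is monochromatic. -/
structure OddMinorModel (H G : MGraph) where
  bs : H.V → Set G.V
  em : H.E → G.E
  col : G.V → ZMod 2
  bs_nonempty : ∀ v, (bs v).Nonempty
  bs_disjoint : ∀ u v, u ≠ v → Disjoint (bs u) (bs v)
  bs_connected : ∀ v, ∀ a ∈ bs v, ∀ b ∈ bs v,
    Relation.ReflTransGen
      (fun x y => x ∈ bs v ∧ y ∈ bs v ∧ col x ≠ col y ∧ ∃ e, G.ends e = s(x, y)) a b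
  em_inj : Function.Injective em
  em_ends : ∀ eH u v, H.ends eH = s(u, v) →
    ∃ a ∈ bs u, ∃ b ∈ bs v, G.ends (em eH) = s(a, b)
  em_mono : ∀ eH u v, G.ends (em eH) = s(u, v) → col u = col v

/-- `G` contains `H` as an odd-minor. -/
def IsOddMinor (H G : MGraph) : Prop := Nonempty (OddMinorModel H G)

/-- `(G,γG)` contains `(H,γH)` as a subdivision. -/
def IsSignedSubdivision (H : MGraph) (γH : H.E → ZMod 2) (G : MGraph)
    (γG : G.E → ZMod 2) : Prop :=
  ∃ (γH' : H.E → ZMod 2) (_ : IsShift H γH γH')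
    (φV : H.V → G.V) (φE : H.E → G.Path),
    Function.Injective φV ∧
    (∀ eH u v, H.ends eH = s(u, v) →
      s((φE eH).first, (φE eH).last) = s(φV u, φV v)) ∧
    (∀ eH, (φE eH).parity γG = γH' eH) ∧
    (∀ e e', e ≠ e' → Disjoint ((φE e).internals) ((φE e').support)) ∧
    (∀ e, Disjoint ((φE e).internals) (Set.range φV))

/-! ## Tree decompositions and width parameters -/

/-- A tree decomposition of a multigraph. -/
structure TreeDecomp (G : MGraph) where
  ι : Type
  tree : SimpleGraph ι
  isTree : tree.IsTree
  bag : ι → Set G.V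
  covers_vertex : ∀ v, ∃ t, v ∈ bag t
  covers_edge : ∀ e, ∃ t, ∀ v ∈ G.ends e, v ∈ bag t
  bag_connected : ∀ v, (tree.induce {t | v ∈ bag t}).Connected

/-- A node of a tree is a leaf if it has at most one neighbour. -/
def IsLeaf {ι : Type} (T : SimpleGraph ι) (t : ι) : Prop :=
  (T.neighborSet t).Subsingleton

/-- A tree `K`-free-decomposition. -/
structure KFreeDecomp (G : MGraph) (K : Set G.V) extends TreeDecomp G where
  L : Set G.V
  L_disj : Disjoint L K
  unique_bag : ∀ v ∈ L, ∃! t, v ∈ bag t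
  leaf_bag : ∀ v ∈ L, ∀ t, v ∈ bag t → IsLeaf tree t

/-- The width of a tree `K`-free-decomposition: `max {0, max_t |β(t)\L| - 1}`. -/
noncomputable def KFreeDecomp.width {G : MGraph} {K : Set G.V}
    (D : KFreeDecomp G K) : ℕ :=
  ⨆ t : D.ι, ((D.bag t \ D.L).ncard - 1)

/-- The `K`-free treewidth of `(G,K)`. -/
noncomputable def twK (G : MGraph) (K : Set G.V) : ℕ :=
  sInf {w | ∃ D : KFreeDecomp G K, D.width = w}

/-- A tame OCP-tree-decomposition of a signed graph. -/
structure TameOCPDecomp (G : MGraph) (γ : G.E → ZMod 2) extends TreeDecomp G where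
  prot : ι → Set G.V
  prot_sub : ∀ t, prot t ⊆ bag t
  prot_adh : ∀ t t', tree.Adj t t' → ((bag t ∩ bag t') \ prot t).ncard ≤ 1

/-- The tame width (t-width) of a tame OCP-tree-decomposition. -/
noncomputable def TameOCPDecomp.twidth {G : MGraph} {γ : G.E → ZMod 2}
    (D : TameOCPDecomp G γ) : ℕ :=
  ⨆ t : D.ι, ((D.prot t).ncard + G.OCPOn γ (D.bag t \ D.prot t))

/-- The tame OCP-treewidth of a signed graph. -/
noncomputable def tOCPtw (G : MGraph) (γ : G.E → ZMod 2) : ℕ :=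
  sInf {w | ∃ D : TameOCPDecomp G γ, D.twidth = w}

/-- A TDM-tree-decomposition of a rooted signed graph. -/
structure TDMDecomp (G : MGraph) (γ : G.E → ZMod 2) (K : Set G.V)
    extends TreeDecomp G where
  prot : ι → Set G.V
  J : Set ι
  J_subtree : J.Nonempty → (tree.induce J).Connected
  prot_sub : ∀ t, prot t ⊆ bag t
  prot_roots : ∀ t, K ∩ bag t ⊆ prot t
  prot_adh : ∀ t t', tree.Adj t t' → ((bag t ∩ bag t') \ prot t).ncard ≤ 1
  strong : ∀ t ∈ J, ∀ t', tree.Adj t t' → bag t ∩ bag t' ⊆ prot t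
  roots_in_J : K ⊆ ⋃ j ∈ J, bag j

/-- The width of a TDM-tree-decomposition. -/
noncomputable def TDMDecomp.width {G : MGraph} {γ : G.E → ZMod 2} {K : Set G.V}
    (D : TDMDecomp G γ K) : ℕ :=
  ⨆ t : D.ι, ((D.prot t).ncard + G.OCPOn γ (D.bag t \ D.prot t))

/-- The TDM-treewidth of a rooted signed graph. -/
noncomputable def TDMtw (G : MGraph) (γ : G.E → ZMod 2) (K : Set G.V) : ℕ :=
  sInf {w | ∃ D : TDMDecomp G γ K, D.width = w}

/-! ## Grids, parity handles, parity vortices -/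

/-- Adjacency of the grid, on `ℕ × ℕ` coordinates. -/
def gridAdj (a b : ℕ × ℕ) : Prop :=
  (a.1 = b.1 ∧ (a.2 + 1 = b.2 ∨ b.2 + 1 = a.2)) ∨
  (a.2 = b.2 ∧ (a.1 + 1 = b.1 ∨ b.1 + 1 = a.1))

/-- The `k × k` grid. -/
def gridGraph (k : ℕ) : MGraph where
  V := Fin k × Fin k
  E := {e : Sym2 (Fin k × Fin k) //
    ∃ a b : Fin k × Fin k, gridAdj (a.1.1, a.2.1) (b.1.1, b.2.1) ∧ e = s(a, b)}
  finV := inferInstance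
  finE := inferInstance
  ends := Subtype.val
  loopless := fun e he => by
    obtain ⟨a, b, hab, h⟩ := e.2
    rw [h, Sym2.mk_isDiag_iff] at he
    subst he
    rcases hab with ⟨_, h' | h'⟩ | ⟨_, h' | h'⟩ <;> omega

/-- The first row of the `k × k` grid. -/
def firstRow (k : ℕ) : Set (gridGraph k).V := {p : Fin k × Fin k | p.1.1 = 0}

/-- The `i`-th designated vertex `x_i` on the outer face of the cylindrical
`(k × 4k)`-grid (every other vertex, `0`-indexed). -/
def xvtx (k : ℕ) (i : Fin (2 * k)) : Fin k × Fin (4 * k) :=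
  (⟨0, by have := i.2; omega⟩, ⟨2 * i.1, by have := i.2; omega⟩)

/-- Adjacency of the cylindrical `(k × 4k)`-grid `P_k □ C_{4k}`. -/
def cylAdj (k : ℕ) (a b : Fin k × Fin (4 * k)) : Prop :=
  (a.1 = b.1 ∧ (a.2.1 + 1 = b.2.1 ∨ b.2.1 + 1 = a.2.1 ∨
    (a.2.1 = 0 ∧ b.2.1 + 1 = 4 * k) ∨ (b.2.1 = 0 ∧ a.2.1 + 1 = 4 * k))) ∨
  (a.2 = b.2 ∧ (a.1.1 + 1 = b.1.1 ∨ b.1.1 + 1 = a.1.1))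

/-- The chords `x_i x_{2k-i+1}` of the parity handle. -/
def handleChord (k : ℕ) (e : Sym2 (Fin k × Fin (4 * k))) : Prop :=
  ∃ i : Fin k, e = s(xvtx k ⟨i.1, by have := i.2; omega⟩,
    xvtx k ⟨2 * k - 1 - i.1, by have := i.2; omega⟩)

/-- The chords `x_{2i-1} x_{2i}` of the parity vortex. -/
def vortexChord (k : ℕ) (e : Sym2 (Fin k × Fin (4 * k))) : Prop :=
  ∃ i : Fin k, e = s(xvtx k ⟨2 * i.1, by have := i.2; omega⟩,
    xvtx k ⟨2 * i.1 + 1, by have := i.2; omega⟩)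

lemma xvtx_ne (k : ℕ) (i j : Fin (2 * k)) (h : i.1 ≠ j.1) : xvtx k i ≠ xvtx k j := by
  intro hc
  have := congrArg (fun p => p.2.1) hc
  simp only [xvtx] at this
  omega

/-- The unsigned, unrooted parity handle `H_k`. -/
def handleGraph (k : ℕ) : MGraph where
  V := Fin k × Fin (4 * k)
  E := {e : Sym2 (Fin k × Fin (4 * k)) //
    (∃ a b, cylAdj k a b ∧ e = s(a, b)) ∨ handleChord k e}
  finV := inferInstance
  finE := inferInstance
  ends := Subtype.val
  loopless := fun e he => by
    rcases e.2 with ⟨a, b, hab, h⟩ | ⟨i, h⟩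
    · rw [h, Sym2.mk_isDiag_iff] at he
      subst he
      have h1 := a.1.2
      have h2 := a.2.2
      rcases hab with ⟨_, h' | h' | ⟨h', h''⟩ | ⟨h', h''⟩⟩ | ⟨_, h' | h'⟩ <;> omega
    · rw [h, Sym2.mk_isDiag_iff] at he
      have := i.2
      exact xvtx_ne k _ _ (show (i.1 : ℕ) ≠ 2 * k - 1 - i.1 by omega) he

/-- The unsigned, unrooted parity vortex `V_k`. -/
def vortexGraph (k : ℕ) : MGraph where
  V := Fin k × Fin (4 * k)
  E := {e : Sym2 (Fin k × Fin (4 * k)) //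
    (∃ a b, cylAdj k a b ∧ e = s(a, b)) ∨ vortexChord k e}
  finV := inferInstance
  finE := inferInstance
  ends := Subtype.val
  loopless := fun e he => by
    rcases e.2 with ⟨a, b, hab, h⟩ | ⟨i, h⟩
    · rw [h, Sym2.mk_isDiag_iff] at he
      subst he
      have h1 := a.1.2
      have h2 := a.2.2
      rcases hab with ⟨_, h' | h' | ⟨h', h''⟩ | ⟨h', h''⟩⟩ | ⟨_, h' | h'⟩ <;> omega
    · rw [h, Sym2.mk_isDiag_iff] at he
      have := i.2
      exact xvtx_ne k _ _ (show (2 * i.1 : ℕ) ≠ 2 * i.1 + 1 by omega) he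

/-- The all-zero signing. -/
def γ₀ (G : MGraph) : G.E → ZMod 2 := fun _ => 0

/-- The all-one signing. -/
def γ₁ (G : MGraph) : G.E → ZMod 2 := fun _ => 1

/-! ## Matrices with two nonzero entries per row -/

/-- `A` has exactly two nonzero entries in every row. -/
def TwoNonzeroPerRow {m n : ℕ} (A : Matrix (Fin m) (Fin n) ℤ) : Prop :=
  ∀ i, {j | A i j ≠ 0}.ncard = 2

/-- The graph `G(A)` of a matrix with exactly two nonzero entries per row:
vertices are columns, edges are rows, each row joining its two nonzero columns. -/
noncomputable def matrixGraph {m n : ℕ} (A : Matrix (Fin m) (Fin n) ℤ)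
    (h : TwoNonzeroPerRow A) : MGraph where
  V := Fin n
  E := Fin m
  finV := inferInstance
  finE := inferInstance
  ends := fun i => s((Set.ncard_eq_two.mp (h i)).choose,
    (Set.ncard_eq_two.mp (h i)).choose_spec.choose)
  loopless := fun i hi => by
    rw [Sym2.mk_isDiag_iff] at hi
    exact (Set.ncard_eq_two.mp (h i)).choose_spec.choose_spec.1 hi

/-- The signing of `G(A)`: a row is even iff its two nonzero entries have
different signs (i.e. the product of its nonzero entries is negative). -/
def matrixSign {m n : ℕ} (A : Matrix (Fin m) (Fin n) ℤ) : Fin m → ZMod 2 :=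
  fun i => if (∏ j ∈ Finset.univ.filter (fun j => A i j ≠ 0), A i j) < 0 then 0 else 1

/-- The roots of `G⁺_•(A)`: columns containing an entry outside `{-1,0,1}`. -/
def matrixRoots {m n : ℕ} (A : Matrix (Fin m) (Fin n) ℤ) : Set (Fin n) :=
  {j | ∃ i, 1 < (A i j).natAbs}

/-- The TDM-treewidth of the rooted signed graph `G⁺_•(A)` associated to `A`. -/
noncomputable def matrixTDMtw {m n : ℕ} (A : Matrix (Fin m) (Fin n) ℤ)
    (h : TwoNonzeroPerRow A) : ℕ :=
  TDMtw (matrixGraph A h) (fun e => matrixSign A e) (fun j => matrixRoots A j)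

/-- The largest absolute value of an entry of `A`. -/
def maxAbsEntry {m n : ℕ} (A : Matrix (Fin m) (Fin n) ℤ) : ℕ :=
  Finset.sup Finset.univ fun i => Finset.sup Finset.univ fun j => (A i j).natAbs

/-- `A` is totally `Δ`-modular: every square subdeterminant has absolute value at
most `Δ`. -/
def TotallyDeltaModular {m n : ℕ} (A : Matrix (Fin m) (Fin n) ℤ) (Δ : ℕ) : Prop :=
  ∀ (s : ℕ) (r : Fin s → Fin m) (c : Fin s → Fin n),
    Function.Injective r → Function.Injective c →
    ((A.submatrix r c).det).natAbs ≤ Δ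

/-- The set of objective values of feasible points of the integer program
`max { wᵀx : Ax ≤ b, ℓ ≤ x ≤ u, x integral }`. -/
def IPvalues {m n : ℕ} (A : Matrix (Fin m) (Fin n) ℤ) (b : Fin m → ℤ)
    (w ℓ u : Fin n → ℤ) : Set ℤ :=
  {y | ∃ x : Fin n → ℤ, (∀ i, ∑ j, A i j * x j ≤ b i) ∧
    (∀ j, ℓ j ≤ x j ∧ x j ≤ u j) ∧ y = ∑ j, w j * x j}

/-- `o` solves the maximization problem over `S`: it is `none` iff `S` is
infeasible, and otherwise it is the maximum value. -/
def SolvesIP (o : Option ℤ) (S : Set ℤ) : Prop :=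
  (o = none ∧ S = ∅) ∨ ∃ y, o = some y ∧ IsGreatest S y


lemma exists_pair {α : Type} (z : Sym2 α) : ∃ p : α × α, z = s(p.1, p.2) :=
  Sym2.ind (fun a b => ⟨(a, b), rfl⟩) z

/-- A chosen first endpoint of an edge. -/
noncomputable def MGraph.ep1 (G : MGraph) (e : G.E) : G.V :=
  (exists_pair (G.ends e)).choose.1

/-- A chosen second endpoint of an edge. -/
noncomputable def MGraph.ep2 (G : MGraph) (e : G.E) : G.V :=
  (exists_pair (G.ends e)).choose.2

lemma MGraph.ends_ep (G : MGraph) (e : G.E) : G.ends e = s(G.ep1 e, G.ep2 e) :=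
  (exists_pair (G.ends e)).choose_spec

lemma map_inl_not_isDiag {α β : Type} (z : Sym2 α) (hz : ¬ z.IsDiag) :
    ¬ (z.map (Sum.inl : α → α ⊕ β)).IsDiag := by
  induction z using Sym2.ind with
  | _ a b =>
    simp only [Sym2.map_pair_eq, Sym2.mk_isDiag_iff] at *
    exact fun h => hz (by injection h)

/-- The graph obtained from `(G,γ)` by subdividing every even edge exactly once. -/
noncomputable def subdivideEven (G : MGraph) (γ : G.E → ZMod 2) : MGraph where
  V := G.V ⊕ {e : G.E // γ e = 0}
  E := {e : G.E // γ e ≠ 0} ⊕ ({e : G.E // γ e = 0} × Bool)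
  finV := inferInstance
  finE := inferInstance
  ends := fun x =>
    match x with
    | .inl e => (G.ends e.1).map .inl
    | .inr (e, b) => s(.inr e, .inl (if b then G.ep1 e.1 else G.ep2 e.1))
  loopless := fun x => by
    match x with
    | .inl e => exact map_inl_not_isDiag _ (G.loopless e.1)
    | .inr (e, b) =>
      rw [Sym2.mk_isDiag_iff]
      simp

/-- Minimum degree at least `d` (each vertex is incident to at least `d` edges). -/
def minDegreeGE (G : MGraph) (d : ℕ) : Prop :=
  ∀ v : G.V, d ≤ {e : G.E | v ∈ G.ends e}.ncard

/-- The `j`-th vertex of the subdividing path: `u`, then `ℓ` new internal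
vertices, then `v`. -/
def pathVert {α : Type} (u v : α) (ℓ : ℕ) (j : Fin (ℓ + 2)) : α ⊕ Fin ℓ :=
  if h0 : j.1 = 0 then .inl u
  else if h1 : j.1 = ℓ + 1 then .inl v
  else .inr ⟨j.1 - 1, by have := j.2; omega⟩

/-- The graph obtained from `G` by replacing the edge `e₀` (with ends `u,v`) by a
path with `ℓ` internal vertices (hence `ℓ + 1` edges). -/
def replaceEdge (G : MGraph) (e₀ : G.E) (u v : G.V) (h : G.ends e₀ = s(u, v))
    (ℓ : ℕ) : MGraph where
  V := G.V ⊕ Fin ℓ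
  E := {e : G.E // e ≠ e₀} ⊕ Fin (ℓ + 1)
  finV := inferInstance
  finE := inferInstance
  ends := fun x =>
    match x with
    | .inl e => (G.ends e.1).map .inl
    | .inr i => s(pathVert u v ℓ ⟨i.1, by have := i.2; omega⟩,
        pathVert u v ℓ ⟨i.1 + 1, by have := i.2; omega⟩)
  loopless := fun x => by
    match x with
    | .inl e => exact map_inl_not_isDiag _ (G.loopless e.1)
    | .inr i =>
      rw [Sym2.mk_isDiag_iff]
      have huv : u ≠ v := by
        intro hc
        exact G.loopless e₀ (by rw [h, hc]; simp)
      have hi := i.2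
      simp only [pathVert]
      split_ifs <;> (simp_all; try omega)

/-- The signing of `replaceEdge`: old edges keep their sign, the `i`-th path edge
gets sign `δ i`. -/
def replaceGamma {G : MGraph} {e₀ : G.E} {u v : G.V} {h : G.ends e₀ = s(u, v)}
    {ℓ : ℕ} (γ : G.E → ZMod 2) (δ : Fin (ℓ + 1) → ZMod 2) :
    (replaceEdge G e₀ u v h ℓ).E → ZMod 2 :=
  fun x => match x with
  | .inl e => γ e.1
  | .inr i => δ i


/-! ### Auxiliary machinery for Statement 12 -/

open Relation

/-- Two vertices of `Y` joined by an edge of `G`. -/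
def stepIn (G : MGraph) (Y : Set G.V) (x y : G.V) : Prop :=
  x ∈ Y ∧ y ∈ Y ∧ ∃ e, G.ends e = s(x, y)

lemma stepIn_symm (G : MGraph) (Y : Set G.V) : Symmetric (stepIn G Y) := by
  rintro x y ⟨hx, hy, e, he⟩
  exact ⟨hy, hx, e, by rw [he, Sym2.eq_swap]⟩

lemma cycle_two_le {G : MGraph} (C : G.Cycle) : 2 ≤ C.n := by
  rcases Nat.lt_or_ge C.n 2 with hlt | h
  · exfalso
    have hn : C.n = 1 := by have := C.npos; omega
    have h0 := C.ends_eq ⟨0, C.npos⟩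
    have heq : (⟨(0 + 1) % C.n, Nat.mod_lt _ C.npos⟩ : Fin C.n) = ⟨0, C.npos⟩ :=
      Fin.ext (by simp [hn])
    rw [heq] at h0
    exact G.loopless _ (by rw [h0]; exact Sym2.mk_isDiag_iff.mpr rfl)
  · exact h

/-- From a refl-trans chain extract an injective chain. -/
lemma exists_injChain {α : Type} (r : α → α → Prop) {a b : α}
    (h : Relation.ReflTransGen r a b) :
    ∃ (k : ℕ) (w : ℕ → α), w 0 = a ∧ w k = b ∧
      (∀ p q, p ≤ k → q ≤ k → w p = w q → p = q) ∧
      (∀ p, p < k → r (w p) (w (p + 1))) := by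
  induction h with
  | refl => exact ⟨0, fun _ => a, rfl, rfl, fun p q hp hq _ => by omega, fun p hp => by omega⟩
  | @tail c d hac hcd ih =>
    obtain ⟨k, w, hw0, hwk, hinj, hstep⟩ := ih
    by_cases hd : ∃ p, p ≤ k ∧ w p = d
    · obtain ⟨p0, hp0, hwp0⟩ := hd
      exact ⟨p0, w, hw0, hwp0,
        fun p q hp hq hpq => hinj p q (by omega) (by omega) hpq,
        fun p hp => hstep p (by omega)⟩
    · push_neg at hd
      refine ⟨k + 1, fun p => if p ≤ k then w p else d, by simp [hw0], by simp, ?_, ?_⟩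
      · intro p q hp hq hpq
        by_cases h1 : p ≤ k <;> by_cases h2 : q ≤ k
        · simp only [if_pos h1, if_pos h2] at hpq; exact hinj p q h1 h2 hpq
        · simp only [if_pos h1, if_neg h2] at hpq; exact absurd hpq (hd p h1)
        · simp only [if_neg h1, if_pos h2] at hpq; exact absurd hpq.symm (hd q h2)
        · omega
      · intro p hp
        by_cases h1 : p < k
        · simpa only [if_pos (by omega : p ≤ k), if_pos (by omega : p + 1 ≤ k)] using hstep p h1
        · show r (if p ≤ k then w p else d) (if p + 1 ≤ k then w (p + 1) else d)
          rw [if_pos (by omega : p ≤ k), if_neg (by omega : ¬ p + 1 ≤ k),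
            show p = k from by omega, hwk]
          exact hcd

lemma cycle_step' {G : MGraph} (D : G.Cycle) (Y : Set G.V) (i j : Fin D.n)
    (hj : j.1 = (i.1 + 1) % D.n)
    (h1 : D.vtx i ∈ Y) (h2 : D.vtx j ∈ Y) :
    stepIn G Y (D.vtx i) (D.vtx j) := by
  refine ⟨h1, h2, D.edge i, ?_⟩
  rw [D.ends_eq i, show (⟨(i.1 + 1) % D.n, Nat.mod_lt _ D.npos⟩ : Fin D.n) = j from
    (Fin.ext hj.symm)]

lemma cycle_chain_incr {G : MGraph} (D : G.Cycle) (Y : Set G.V) :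
    ∀ (sl : ℕ) (i j : Fin D.n), i.1 + sl = j.1 →
      (∀ p : Fin D.n, i.1 ≤ p.1 → p.1 ≤ j.1 → D.vtx p ∈ Y) →
      Relation.ReflTransGen (stepIn G Y) (D.vtx i) (D.vtx j) := by
  intro sl
  induction sl with
  | zero =>
    intro i j hij _
    have : i = j := Fin.ext (by omega)
    subst this; exact .refl
  | succ m ih =>
    intro i j hij hmem
    have hi1 : i.1 + 1 < D.n := by have := j.2; omega
    have hstep : stepIn G Y (D.vtx i) (D.vtx ⟨i.1 + 1, hi1⟩) :=
      cycle_step' D Y i ⟨i.1 + 1, hi1⟩ (by simp [Nat.mod_eq_of_lt hi1])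
        (hmem i le_rfl (by omega)) (hmem ⟨i.1 + 1, hi1⟩ (by simp) (by simp; omega))
    exact Relation.ReflTransGen.head hstep
      (ih ⟨i.1 + 1, hi1⟩ j (by simp; omega) (fun p h1 h2 => hmem p (by simp at h1; omega) h2))

lemma cycle_chain_full {G : MGraph} (D : G.Cycle) (i j : Fin D.n) :
    Relation.ReflTransGen (stepIn G (Set.range D.vtx)) (D.vtx i) (D.vtx j) := by
  have hn := D.npos
  have hmem : ∀ p : Fin D.n, p.1 ≥ 0 → p.1 ≤ D.n - 1 → D.vtx p ∈ Set.range D.vtx :=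
    fun p _ _ => ⟨p, rfl⟩
  have hlast : (D.n - 1) < D.n := by omega
  have c1 : Relation.ReflTransGen (stepIn G (Set.range D.vtx)) (D.vtx i)
      (D.vtx ⟨D.n - 1, hlast⟩) :=
    cycle_chain_incr D _ (D.n - 1 - i.1) i ⟨D.n - 1, hlast⟩ (by have := i.2; simp; omega)
      (fun p _ _ => ⟨p, rfl⟩)
  have wstep : stepIn G (Set.range D.vtx) (D.vtx ⟨D.n - 1, hlast⟩) (D.vtx ⟨0, hn⟩) :=
    cycle_step' D _ _ _ (by simp [show D.n - 1 + 1 = D.n from by omega, Nat.mod_self])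
      ⟨_, rfl⟩ ⟨_, rfl⟩
  have c2 : Relation.ReflTransGen (stepIn G (Set.range D.vtx)) (D.vtx ⟨0, hn⟩) (D.vtx j) :=
    cycle_chain_incr D _ j.1 ⟨0, hn⟩ j (by simp) (fun p _ _ => ⟨p, rfl⟩)
  exact (c1.trans (Relation.ReflTransGen.single wstep)).trans c2

lemma cycle_chain_avoid {G : MGraph} (D : G.Cycle) (a i j : Fin D.n)
    (hia : i ≠ a) (hja : j ≠ a) :
    Relation.ReflTransGen (stepIn G (Set.range D.vtx \ {D.vtx a})) (D.vtx i) (D.vtx j) := by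
  have hn := D.npos
  have hmem : ∀ p : Fin D.n, p ≠ a → D.vtx p ∈ Set.range D.vtx \ {D.vtx a} :=
    fun p hp => ⟨⟨p, rfl⟩, fun hc => hp (D.vtx_inj hc)⟩
  have key : ∀ i j : Fin D.n, i.1 ≤ j.1 → i ≠ a → j ≠ a →
      Relation.ReflTransGen (stepIn G (Set.range D.vtx \ {D.vtx a})) (D.vtx i) (D.vtx j) := by
    intro i j hle hia hja
    have hia' : i.1 ≠ a.1 := fun h => hia (Fin.ext h)
    have hja' : j.1 ≠ a.1 := fun h => hja (Fin.ext h)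
    by_cases hmid : a.1 < i.1 ∨ j.1 < a.1
    · exact cycle_chain_incr D _ (j.1 - i.1) i j (by omega)
        (fun p h1 h2 => hmem p (fun hc => by rw [hc] at h1 h2; omega))
    · push_neg at hmid
      have h1 : i.1 < a.1 := by omega
      have h2 : a.1 < j.1 := by omega
      have hlast : (D.n - 1) < D.n := by omega
      have hja2 := j.2
      have c1 : Relation.ReflTransGen (stepIn G (Set.range D.vtx \ {D.vtx a})) (D.vtx j)
          (D.vtx ⟨D.n - 1, hlast⟩) :=
        cycle_chain_incr D _ (D.n - 1 - j.1) j ⟨D.n - 1, hlast⟩ (by simp; omega)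
          (fun p hp1 hp2 => hmem p (fun hc => by rw [hc] at hp1; omega))
      have wstep : stepIn G (Set.range D.vtx \ {D.vtx a}) (D.vtx ⟨D.n - 1, hlast⟩)
          (D.vtx ⟨0, hn⟩) :=
        cycle_step' D _ _ _ (by simp [show D.n - 1 + 1 = D.n from by omega, Nat.mod_self])
          (hmem _ (fun hc => by have := congrArg Fin.val hc; simp at this; omega))
          (hmem _ (fun hc => by have := congrArg Fin.val hc; simp at this; omega))
      have c2 : Relation.ReflTransGen (stepIn G (Set.range D.vtx \ {D.vtx a})) (D.vtx ⟨0, hn⟩)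
          (D.vtx i) :=
        cycle_chain_incr D _ i.1 ⟨0, hn⟩ i (by simp)
          (fun p hp1 hp2 => hmem p (fun hc => by rw [hc] at hp2; simp at hp2; omega))
      exact (@Relation.ReflTransGen.stdSymm _ _ ⟨fun _ _ h => stepIn_symm G _ h⟩).symm _ _
        ((c1.trans (Relation.ReflTransGen.single wstep)).trans c2)
  rcases le_or_gt i.1 j.1 with h | h
  · exact key i j h hia hja
  · exact (@Relation.ReflTransGen.stdSymm _ _ ⟨fun _ _ h => stepIn_symm G _ h⟩).symm _ _ (key j i (by omega) hja hia)
/-! ### Tree separator machinery -/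

/-- The set of nodes reachable from `r₀` after deleting the edge `e`. -/
def side {ι : Type} (T : SimpleGraph ι) (e : Sym2 ι) (r₀ : ι) : Set ι :=
  {r | (T.deleteEdges {e}).Reachable r₀ r}

lemma side_self {ι : Type} (T : SimpleGraph ι) (e : Sym2 ι) (r₀ : ι) : r₀ ∈ side T e r₀ :=
  SimpleGraph.Reachable.refl _

lemma side_union {ι : Type} {T : SimpleGraph ι} (hc : T.Connected) (t s : ι) (r : ι) :
    r ∈ side T s(t, s) t ∨ r ∈ side T s(t, s) s := by
  have aux : ∀ (u r : ι), T.Walk u r →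
      (u ∈ side T s(t, s) t ∨ u ∈ side T s(t, s) s) →
      (r ∈ side T s(t, s) t ∨ r ∈ side T s(t, s) s) := by
    intro u r w
    induction w with
    | nil => exact id
    | @cons u v r hadj p ih =>
      intro hu
      apply ih
      by_cases he : s(u, v) = s(t, s)
      · rcases Sym2.eq_iff.mp he with ⟨rfl, rfl⟩ | ⟨rfl, rfl⟩
        · exact Or.inr (side_self _ _ _)
        · exact Or.inl (side_self _ _ _)
      · have hadj' : (T.deleteEdges {s(t, s)}).Adj u v := by
          rw [SimpleGraph.deleteEdges_adj]
          exact ⟨hadj, by simpa using he⟩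
        rcases hu with h | h
        · exact Or.inl (h.trans hadj'.reachable)
        · exact Or.inr (h.trans hadj'.reachable)
  obtain ⟨w⟩ := hc.preconnected t r
  exact aux t r w (Or.inl (side_self _ _ _))

lemma side_disj {ι : Type} {T : SimpleGraph ι} (hT : T.IsTree) {t s : ι} (hadj : T.Adj t s) :
    ∀ r, r ∈ side T s(t, s) t → r ∈ side T s(t, s) s → False := by
  intro r h1 h2
  have hbr : T.IsBridge s(t, s) :=
    SimpleGraph.isAcyclic_iff_forall_adj_isBridge.mp hT.IsAcyclic hadj
  rw [SimpleGraph.isBridge_iff] at hbr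
  exact hbr (h1.trans h2.symm)

lemma side_cross_adj {ι : Type} {T : SimpleGraph ι} (hT : T.IsTree) {t s : ι}
    (hadj : T.Adj t s) {p q : ι} (hp : p ∈ side T s(t, s) t) (hq : q ∈ side T s(t, s) s)
    (hpq : T.Adj p q) : p = t ∧ q = s := by
  by_cases he : s(p, q) = s(t, s)
  · rcases Sym2.eq_iff.mp he with ⟨rfl, rfl⟩ | ⟨rfl, rfl⟩
    · exact ⟨rfl, rfl⟩
    · exact (side_disj hT hadj p hp (side_self _ _ _)).elim
  · have hadj' : (T.deleteEdges {s(t, s)}).Adj p q := by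
      rw [SimpleGraph.deleteEdges_adj]
      exact ⟨hpq, by simpa using he⟩
    exact (side_disj hT hadj q (hp.trans hadj'.reachable) hq).elim

lemma keyCross {G : MGraph} (D : TreeDecomp G) {t s : D.ι} (hadj : D.tree.Adj t s)
    {x : G.V} {r₁ r₂ : D.ι} (h1 : r₁ ∈ side D.tree s(t, s) t) (h2 : r₂ ∈ side D.tree s(t, s) s)
    (hx1 : x ∈ D.bag r₁) (hx2 : x ∈ D.bag r₂) : x ∈ D.bag t ∧ x ∈ D.bag s := by
  have aux : ∀ (u v : {r // r ∈ {r | x ∈ D.bag r}})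
      (_ : (D.tree.induce {r | x ∈ D.bag r}).Walk u v),
      u.1 ∈ side D.tree s(t, s) t → v.1 ∈ side D.tree s(t, s) s →
      x ∈ D.bag t ∧ x ∈ D.bag s := by
    intro u v w
    induction w with
    | nil =>
      intro hu hv
      exact (side_disj D.isTree hadj _ hu hv).elim
    | @cons u u' v hadj' p ih =>
      intro hu hv
      have hA : D.tree.Adj u.1 u'.1 := hadj'
      rcases side_union D.isTree.isConnected t s u'.1 with h | h
      · exact ih h hv
      · obtain ⟨hut, hus⟩ := side_cross_adj D.isTree hadj hu h hA
        exact ⟨hut ▸ u.2, hus ▸ u'.2⟩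
  obtain ⟨w⟩ := (D.bag_connected x).preconnected ⟨r₁, hx1⟩ ⟨r₂, hx2⟩
  exact aux _ _ w h1 h2

lemma exists_nbr_side {G : MGraph} (D : TreeDecomp G) {s₀ t : D.ι} (hne : s₀ ≠ t) :
    ∃ s, D.tree.Adj t s ∧ s₀ ∈ side D.tree s(t, s) s := by
  classical
  obtain ⟨w⟩ := D.isTree.isConnected t s₀
  obtain ⟨p, hp⟩ : ∃ p : D.tree.Walk t s₀, p.IsPath := ⟨w.toPath.1, w.toPath.2⟩
  cases p with
  | nil => exact absurd rfl hne
  | @cons _ s _ hadj q =>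
    rw [SimpleGraph.Walk.cons_isPath_iff] at hp
    refine ⟨s, hadj, ?_⟩
    have hq : ∀ e ∈ q.edges, e ∉ ({s(t, s)} : Set (Sym2 D.ι)) := by
      intro e he hmem
      rw [Set.mem_singleton_iff] at hmem
      subst hmem
      exact hp.2 (q.fst_mem_support_of_mem_edges he)
    exact ⟨q.toDeleteEdges _ hq⟩

lemma chain_meets_sep {G : MGraph} (D : TreeDecomp G) {t s : D.ι} (hadj : D.tree.Adj t s)
    {Y : Set G.V} {p q : G.V}
    (hch : Relation.ReflTransGen (stepIn G Y) p q) (hp : p ∈ Y)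
    (hpA : ∃ r, r ∈ side D.tree s(t, s) t ∧ p ∈ D.bag r)
    (hqB : ∃ r, r ∈ side D.tree s(t, s) s ∧ q ∈ D.bag r) :
    ∃ y, y ∈ Y ∧ y ∈ D.bag t ∧ y ∈ D.bag s := by
  obtain ⟨rq, hrq, hqbag⟩ := hqB
  revert hp hpA
  induction hch using Relation.ReflTransGen.head_induction_on with
  | refl =>
    intro hq ⟨r₁, hr₁, hq1⟩
    have hk := keyCross D hadj hr₁ hrq hq1 hqbag
    exact ⟨q, hq, hk.1, hk.2⟩
  | @head x c hxc hcq ih =>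
    intro hx ⟨r₁, hr₁A, hx1⟩
    obtain ⟨hxY, hcY, e, he⟩ := hxc
    obtain ⟨r', hr'⟩ := D.covers_vertex c
    rcases side_union D.isTree.isConnected t s r' with hA | hB
    · exact ih hcY ⟨r', hA, hr'⟩
    · obtain ⟨r'', hr''⟩ := D.covers_edge e
      have hx'' : x ∈ D.bag r'' := hr'' x (by rw [he]; exact Sym2.mem_mk_left _ _)
      have hc'' : c ∈ D.bag r'' := hr'' c (by rw [he]; exact Sym2.mem_mk_right _ _)
      rcases side_union D.isTree.isConnected t s r'' with hA2 | hB2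
      · have hk := keyCross D hadj hA2 hB hc'' hr'
        exact ⟨c, hcY, hk.1, hk.2⟩
      · have hk := keyCross D hadj hr₁A hB2 hx1 hx''
        exact ⟨x, hxY, hk.1, hk.2⟩
/-! ### The structural lemma: expansions of packed cycles stay in the bag -/

lemma support_in_bag {G : MGraph} (D : TreeDecomp G) (t : D.ι) (P : Set G.V)
    (htame : ∀ t', D.tree.Adj t t' → ((D.bag t ∩ D.bag t') \ P).ncard ≤ 1)
    (Dc : G.Cycle) {n : ℕ} (hn2 : 2 ≤ n) (U : Fin n → Set G.V)
    (hUdisj : ∀ i j : Fin n, i ≠ j → Disjoint (U i) (U j))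
    (hUconn : ∀ i : Fin n, ∀ x ∈ U i, ∀ y ∈ U i,
      Relation.ReflTransGen (stepIn G (U i)) x y)
    (hUbag : ∀ i, (U i ∩ D.bag t).Nonempty)
    (hUprot : ∀ i, U i ∩ P = ∅)
    (hWsub : ∀ x ∈ Set.range Dc.vtx, ∃ i, x ∈ U i)
    (hWU : ∀ i, (U i ∩ Set.range Dc.vtx).Nonempty) :
    Set.range Dc.vtx ⊆ D.bag t := by
  intro x₀ hx₀
  by_contra hxb
  obtain ⟨ix, hix⟩ := hx₀
  obtain ⟨s₀, hs₀⟩ := D.covers_vertex x₀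
  have hs₀t : s₀ ≠ t := fun h => hxb (h ▸ hs₀)
  obtain ⟨s, hadj, hs₀B⟩ := exists_nbr_side D hs₀t
  set A := side D.tree s(t, s) t with hA
  set B := side D.tree s(t, s) s with hB
  have htA : t ∈ A := side_self _ _ _
  set Z := (D.bag t ∩ D.bag s) \ P with hZdef
  have hZ : ∀ y y', y ∈ Z → y' ∈ Z → y = y' := by
    intro y y' hy hy'
    exact (Set.ncard_le_one_iff (Set.toFinite _)).mp (htame s hadj) hy hy'
  have hnotP : ∀ x ∈ Set.range Dc.vtx, x ∉ P := by
    intro x hx hxP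
    obtain ⟨i, hi⟩ := hWsub x hx
    exact Set.eq_empty_iff_forall_notMem.mp (hUprot i) x ⟨hi, hxP⟩
  have hmeets : ∀ i : Fin n, ∃ y, y ∈ U i ∧ y ∈ Z := by
    by_cases hcase : ∃ z ∈ Set.range Dc.vtx, z ∈ D.bag t ∧ z ∈ D.bag s
    · -- case: the cycle meets the separator in (the unique) z
      obtain ⟨z, hzW, hzt, hzs⟩ := hcase
      have hzZ : z ∈ Z := ⟨⟨hzt, hzs⟩, hnotP z hzW⟩
      obtain ⟨iz, hiz⟩ := hzW
      intro i
      by_cases hzi : z ∈ U i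
      · exact ⟨z, hzi, hzZ⟩
      · obtain ⟨wi, hwiU, hwiW⟩ := hWU i
        obtain ⟨iw, hiw⟩ := hwiW
        have hiwz : iw ≠ iz := by
          intro h; rw [h, hiz] at hiw; exact hzi (hiw ▸ hwiU)
        have hixz : ix ≠ iz := by
          intro h; rw [h, hiz] at hix; exact hxb (hix ▸ hzt)
        -- w_i has a bag on the B side
        have hwiB : ∃ r, r ∈ B ∧ wi ∈ D.bag r := by
          obtain ⟨r, hr⟩ := D.covers_vertex wi
          rcases side_union D.isTree.isConnected t s r with h | h
          · exfalso
            have hch := cycle_chain_avoid Dc iz iw ix hiwz hixz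
            rw [hiw, hix] at hch
            have hwiY : wi ∈ Set.range Dc.vtx \ {Dc.vtx iz} :=
              ⟨hiw ▸ ⟨iw, rfl⟩, by rw [hiz]; intro hc; exact hzi (hc ▸ hwiU)⟩
            obtain ⟨y, hyY, hyt, hys⟩ := chain_meets_sep D hadj hch hwiY
              ⟨r, h, hr⟩ ⟨s₀, hs₀B, hs₀⟩
            have hyZ : y ∈ Z := ⟨⟨hyt, hys⟩, hnotP y hyY.1⟩
            exact hyY.2 (by rw [hiz]; exact hZ y z hyZ hzZ)
          · exact ⟨r, h, hr⟩
        obtain ⟨pi, hpiU, hpibag⟩ := hUbag i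
        obtain ⟨rB, hrB, hwiB'⟩ := hwiB
        obtain ⟨y, hyU, hyt, hys⟩ := chain_meets_sep D hadj
          (hUconn i pi hpiU wi hwiU) hpiU ⟨t, htA, hpibag⟩ ⟨rB, hrB, hwiB'⟩
        exact ⟨y, hyU, ⟨⟨hyt, hys⟩, fun hyP =>
          Set.eq_empty_iff_forall_notMem.mp (hUprot i) y ⟨hyU, hyP⟩⟩⟩
    · -- case: the cycle misses the separator entirely
      push_neg at hcase
      intro i
      obtain ⟨wi, hwiU, hwiW⟩ := hWU i
      have hwiB : ∃ r, r ∈ B ∧ wi ∈ D.bag r := by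
        obtain ⟨r, hr⟩ := D.covers_vertex wi
        rcases side_union D.isTree.isConnected t s r with h | h
        · exfalso
          obtain ⟨iw, hiw⟩ := hwiW
          have hch := cycle_chain_full Dc iw ix
          rw [hiw, hix] at hch
          obtain ⟨y, hyY, hyt, hys⟩ := chain_meets_sep D hadj hch (hiw ▸ ⟨iw, rfl⟩)
            ⟨r, h, hr⟩ ⟨s₀, hs₀B, hs₀⟩
          exact hcase y hyY hyt hys
        · exact ⟨r, h, hr⟩
      obtain ⟨pi, hpiU, hpibag⟩ := hUbag i
      obtain ⟨rB, hrB, hwiB'⟩ := hwiB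
      obtain ⟨y, hyU, hyt, hys⟩ := chain_meets_sep D hadj
        (hUconn i pi hpiU wi hwiU) hpiU ⟨t, htA, hpibag⟩ ⟨rB, hrB, hwiB'⟩
      exact ⟨y, hyU, ⟨⟨hyt, hys⟩, fun hyP =>
        Set.eq_empty_iff_forall_notMem.mp (hUprot i) y ⟨hyU, hyP⟩⟩⟩
  obtain ⟨y0, hy0U, hy0Z⟩ := hmeets ⟨0, by omega⟩
  obtain ⟨y1, hy1U, hy1Z⟩ := hmeets ⟨1, by omega⟩
  have hne : (⟨0, by omega⟩ : Fin n) ≠ ⟨1, by omega⟩ := by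
    intro h; exact absurd (congrArg Fin.val h) (by simp)
  exact Set.disjoint_left.mp (hUdisj _ _ hne) hy0U (hZ y1 y0 hy1Z hy0Z ▸ hy1U)
/-! ### Expanding a cycle of the minor into a cycle of the host graph -/

lemma sum_range_split {M : Type} [AddCommMonoid M] (f : ℕ → M) (m k : ℕ) :
    ∑ p ∈ Finset.range (m + k), f p
      = (∑ p ∈ Finset.range m, f p) + ∑ p ∈ Finset.range k, f (m + p) := by
  induction k with
  | zero => simp
  | succ k ih =>
    rw [show m + (k + 1) = (m + k) + 1 from rfl, Finset.sum_range_succ, ih,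
      Finset.sum_range_succ, add_assoc]

lemma exists_expansion (G : MGraph) (γ' : G.E → ZMod 2) {n : ℕ} (hn2 : 2 ≤ n)
    (U : Fin n → Set G.V)
    (hdisj : ∀ i j : Fin n, i ≠ j → Disjoint (U i) (U j))
    (hconn : ∀ i : Fin n, ∀ x ∈ U i, ∀ y ∈ U i,
      Relation.ReflTransGen (fun x y => x ∈ U i ∧ y ∈ U i ∧ ∃ e, γ' e = 0 ∧ G.ends e = s(x, y)) x y)
    (g : Fin n → G.E) (hginj : Function.Injective g)
    (a b : Fin n → G.V) (ha : ∀ i, a i ∈ U i)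
    (hb : ∀ i : Fin n, b i ∈ U ⟨(i.1 + 1) % n, Nat.mod_lt _ (by omega)⟩)
    (hge : ∀ i, G.ends (g i) = s(a i, b i)) :
    ∃ D : G.Cycle,
      (∀ x ∈ Set.range D.vtx, ∃ i, x ∈ U i) ∧ (∀ i, a i ∈ Set.range D.vtx) ∧
      D.parity γ' = ∑ i, γ' (g i) := by
  have hnpos : 0 < n := by omega
  -- different branch sets used at consecutive indices
  have hdisj' : ∀ (i j : Fin n), i.1 ≠ j.1 → ∀ x, x ∈ U i → x ∈ U j → False := by
    intro i j hij x h1 h2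
    exact Set.disjoint_left.mp (hdisj i j (fun h => hij (congrArg Fin.val h))) h1 h2
  -- segment extraction
  have seg : ∀ (i : Fin n) (x y : G.V), x ∈ U i → y ∈ U i →
      ∃ (k : ℕ) (w : ℕ → G.V) (pe : ℕ → G.E),
        w 0 = x ∧ w k = y ∧ (∀ p q, p ≤ k → q ≤ k → w p = w q → p = q) ∧
        (∀ p, p ≤ k → w p ∈ U i) ∧
        (∀ p, p < k → γ' (pe p) = 0 ∧ G.ends (pe p) = s(w p, w (p + 1))) := by
    intro i x y hx hy
    obtain ⟨k, w, h0, hk, hinj, hstep⟩ := exists_injChain _ (hconn i x hx y hy)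
    refine ⟨k, w, fun p => if hp : p < k then ((hstep p hp).2.2).choose else g ⟨0, hnpos⟩,
      h0, hk, hinj, ?_, ?_⟩
    · intro p hp
      rcases Nat.lt_or_ge p k with h | h
      · exact (hstep p h).1
      · have hpk : p = k := by omega
        subst hpk; rw [hk]; exact hy
    · intro p hp
      simp only [dif_pos hp]
      exact ((hstep p hp).2.2).choose_spec
  have hbn : b ⟨n - 1, by omega⟩ ∈ U ⟨0, hnpos⟩ := by
    have h1 := hb ⟨n - 1, by omega⟩
    have h3 : (⟨((⟨n - 1, by omega⟩ : Fin n).1 + 1) % n, Nat.mod_lt _ (by omega)⟩ : Fin n)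
        = ⟨0, hnpos⟩ :=
      Fin.ext (by show ((n - 1) + 1) % n = 0
                  rw [show (n - 1) + 1 = n from by omega, Nat.mod_self])
    rwa [h3] at h1
  -- b (j-1) lands in U j, for 1 ≤ j < n
  have hbj : ∀ (j : ℕ) (hj1 : 1 ≤ j) (hjn : j < n), b ⟨j - 1, by omega⟩ ∈ U ⟨j, hjn⟩ := by
    intro j hj1 hjn
    have h1 := hb ⟨j - 1, by omega⟩
    have h3 : (⟨((⟨j - 1, by omega⟩ : Fin n).1 + 1) % n, Nat.mod_lt _ (by omega)⟩ : Fin n)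
        = ⟨j, hjn⟩ :=
      Fin.ext (by show ((j - 1) + 1) % n = j
                  rw [show (j - 1) + 1 = j from by omega, Nat.mod_eq_of_lt hjn])
    rwa [h3] at h1
  -- the endpoint b j of the j-th model edge lies in a branch set other than U j
  have hbother : ∀ (j : Fin n), ∃ r : Fin n, r.1 ≠ j.1 ∧ b j ∈ U r := by
    intro j
    refine ⟨⟨(j.1 + 1) % n, Nat.mod_lt _ (by omega)⟩, ?_, hb j⟩
    show (j.1 + 1) % n ≠ j.1
    rcases Nat.lt_or_ge (j.1 + 1) n with h | h
    · rw [Nat.mod_eq_of_lt h]; omega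
    · have : j.1 + 1 = n := by have := j.2; omega
      rw [this, Nat.mod_self]; have := j.2; omega
  have REC : ∀ j : ℕ, 1 ≤ j → j ≤ n →
      ∃ (m : ℕ) (vf : ℕ → G.V) (ef : ℕ → G.E),
        1 ≤ m ∧
        vf 0 = b ⟨n - 1, by omega⟩ ∧
        (∀ p, p + 1 < m → G.ends (ef p) = s(vf p, vf (p + 1))) ∧
        (∀ hj : j - 1 < n, G.ends (ef (m - 1)) = s(vf (m - 1), b ⟨j - 1, hj⟩)) ∧
        (∀ p, p < m → ∃ i : Fin n, i.1 < j ∧ vf p ∈ U i) ∧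
        (∀ p q, p < m → q < m → vf p = vf q → p = q) ∧
        (∀ p q, p < m → q < m → ef p = ef q → p = q) ∧
        (∀ p, p < m → (∃ i : Fin n, i.1 < j ∧ ef p = g i) ∨
          (∃ i : Fin n, i.1 < j ∧ ∀ y ∈ G.ends (ef p), y ∈ U i)) ∧
        ((∑ p ∈ Finset.range m, γ' (ef p))
          = ∑ i ∈ Finset.univ.filter (fun i : Fin n => i.1 < j), γ' (g i)) ∧
        (∀ i : Fin n, i.1 < j → ∃ p, p < m ∧ vf p = a i) := by
    intro j hj1
    induction j, hj1 using Nat.le_induction with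
    | base =>
      intro hn1
      obtain ⟨k, w, pe, hw0, hwk, hwinj, hwmem, hpe⟩ :=
        seg ⟨0, hnpos⟩ (b ⟨n - 1, by omega⟩) (a ⟨0, hnpos⟩) hbn (ha _)
      have hef : ∀ p, p < k → (fun p => if p < k then pe p else g ⟨0, hnpos⟩) p = pe p :=
        fun p hp => if_pos hp
      refine ⟨k + 1, w, fun p => if p < k then pe p else g ⟨0, hnpos⟩,
        by omega, hw0, ?_, ?_, ?_, ?_, ?_, ?_, ?_, ?_⟩
      · intro p hp
        beta_reduce
        rw [if_pos (by omega : p < k)]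
        exact (hpe p (by omega)).2
      · intro hj
        beta_reduce
        simp only [Nat.add_sub_cancel]
        rw [if_neg (lt_irrefl k), hwk]
        exact hge ⟨0, hnpos⟩
      · intro p hp
        exact ⟨⟨0, hnpos⟩, Nat.zero_lt_one, hwmem p (by omega)⟩
      · intro p q hp hq h
        exact hwinj p q (by omega) (by omega) h
      · -- edge injectivity
        have hkey : ∀ p, p < k → pe p ≠ g ⟨0, hnpos⟩ := by
          intro p hp hq
          obtain ⟨r, hr, hbr⟩ := hbother ⟨0, hnpos⟩
          have he1 := (hpe p hp).2
          rw [hq, hge ⟨0, hnpos⟩] at he1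
          rcases Sym2.eq_iff.mp he1 with ⟨h1, h2⟩ | ⟨h1, h2⟩
          · exact hdisj' r ⟨0, hnpos⟩ hr (b ⟨0, hnpos⟩) hbr (h2 ▸ hwmem (p + 1) (by omega))
          · exact hdisj' r ⟨0, hnpos⟩ hr (b ⟨0, hnpos⟩) hbr (h2 ▸ hwmem p (by omega))
        intro p q hp hq h
        beta_reduce at h
        by_cases h1 : p < k <;> by_cases h2 : q < k
        · rw [if_pos h1, if_pos h2] at h
          have e1 := (hpe p h1).2
          have e2 := (hpe q h2).2
          rw [h] at e1
          rcases Sym2.eq_iff.mp (e1.symm.trans e2) with ⟨ha1, ha2⟩ | ⟨ha1, ha2⟩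
          · exact hwinj p q (by omega) (by omega) ha1
          · have := hwinj p (q + 1) (by omega) (by omega) ha1
            have := hwinj (p + 1) q (by omega) (by omega) ha2
            omega
        · rw [if_pos h1, if_neg h2] at h
          exact absurd h (hkey p h1)
        · rw [if_neg h1, if_pos h2] at h
          exact absurd h.symm (hkey q h2)
        · omega
      · intro p hp
        by_cases h1 : p < k
        · refine Or.inr ⟨⟨0, hnpos⟩, Nat.zero_lt_one, ?_⟩
          intro y hy
          beta_reduce at hy
          rw [if_pos h1, (hpe p h1).2] at hy
          rcases Sym2.mem_iff.mp hy with rfl | rfl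
          · exact hwmem p (by omega)
          · exact hwmem (p + 1) (by omega)
        · exact Or.inl ⟨⟨0, hnpos⟩, Nat.zero_lt_one, by beta_reduce; rw [if_neg h1]⟩
      · beta_reduce
        rw [Finset.sum_range_succ, if_neg (lt_irrefl k)]
        have hz : (∑ p ∈ Finset.range k, γ' (if p < k then pe p else g ⟨0, hnpos⟩)) = 0 := by
          apply Finset.sum_eq_zero
          intro p hp
          rw [Finset.mem_range] at hp
          rw [if_pos hp]
          exact (hpe p hp).1
        rw [hz, zero_add]
        have hfil : Finset.univ.filter (fun i : Fin n => i.1 < 1) = {(⟨0, hnpos⟩ : Fin n)} := by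
          ext i
          simp only [Finset.mem_filter, Finset.mem_univ, true_and, Finset.mem_singleton,
            Fin.ext_iff]
          omega
        rw [hfil, Finset.sum_singleton]
      · intro i hi
        have : i = ⟨0, hnpos⟩ := Fin.ext (Nat.lt_one_iff.mp hi)
        subst this
        exact ⟨k, by omega, hwk⟩
    | succ j hj ih =>
      intro hjn
      obtain ⟨m, vf, ef, i1, i2, i3, i4, i5, i6, i7, i8, i9, i10⟩ := ih (by omega)
      have hjltn : j < n := by omega
      set jF : Fin n := ⟨j, hjltn⟩ with hjF
      have hjFv : jF.1 = j := rfl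
      obtain ⟨k, w, pe, hw0, hwk, hwinj, hwmem, hpe⟩ :=
        seg jF (b ⟨j - 1, by omega⟩) (a jF) (hbj j (by omega) hjltn) (ha jF)
      refine ⟨m + (k + 1),
        fun p => if p < m then vf p else w (p - m),
        fun p => if p < m then ef p else if p < m + k then pe (p - m) else g jF,
        by omega, ?_, ?_, ?_, ?_, ?_, ?_, ?_, ?_, ?_⟩
      · beta_reduce
        rw [if_pos (by omega : (0:ℕ) < m)]; exact i2
      · -- chain property
        intro p hp
        beta_reduce
        by_cases h1 : p + 1 < m
        · simp only [if_pos (by omega : p < m), if_pos h1]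
          exact i3 p h1
        · by_cases h2 : p < m
          · -- p = m - 1
            have hpm : p = m - 1 := by omega
            simp only [if_pos h2, if_neg h1]
            have hj9 : j - 1 < n := by omega
            have hw0' : w (p + 1 - m) = b ⟨j - 1, hj9⟩ := by
              rw [show p + 1 - m = 0 from by omega]; exact hw0
            rw [hw0', hpm]
            exact i4 hj9
          · -- within the new segment
            simp only [if_neg h2, if_neg h1, if_pos (by omega : p < m + k)]
            have hd : p - m < k := by omega
            have h5 := (hpe (p - m) hd).2
            rw [show p + 1 - m = (p - m) + 1 from by omega]
            exact h5
      · -- dangling edge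
        intro hj'
        beta_reduce
        rw [show m + (k + 1) - 1 = m + k from by omega,
          if_neg (by omega : ¬ m + k < m), if_neg (lt_irrefl (m + k)),
          if_neg (by omega : ¬ m + k < m), show m + k - m = k from by omega, hwk]
        have hbb : (⟨j + 1 - 1, hj'⟩ : Fin n) = jF := Fin.ext (show j + 1 - 1 = jF.1 by omega)
        rw [hbb]
        exact hge jF
      · -- membership
        intro p hp
        have hjFlt : jF.1 < j + 1 := by rw [hjF]; exact Nat.lt_succ_self j
        by_cases h1 : p < m
        · obtain ⟨i, hi1, hi2⟩ := i5 p h1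
          exact ⟨i, by omega, by beta_reduce; rw [if_pos h1]; exact hi2⟩
        · exact ⟨jF, hjFlt, by beta_reduce; rw [if_neg h1]; exact hwmem (p - m) (by omega)⟩
      · -- vertex injectivity
        intro p q hp hq h
        beta_reduce at h
        by_cases h1 : p < m <;> by_cases h2 : q < m
        · rw [if_pos h1, if_pos h2] at h; exact i6 p q h1 h2 h
        · rw [if_pos h1, if_neg h2] at h
          obtain ⟨i, hi1, hi2⟩ := i5 p h1
          exact (hdisj' i jF (by omega) (vf p) hi2
            (by rw [h]; exact hwmem (q - m) (by omega))).elim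
        · rw [if_neg h1, if_pos h2] at h
          obtain ⟨i, hi1, hi2⟩ := i5 q h2
          exact (hdisj' i jF (by omega) (vf q) hi2
            (by rw [← h]; exact hwmem (p - m) (by omega))).elim
        · rw [if_neg h1, if_neg h2] at h
          have := hwinj (p - m) (q - m) (by omega) (by omega) h
          omega
      · -- edge injectivity
        have hnews : ∀ d, d < k → ∀ y ∈ G.ends (pe d), y ∈ U jF := by
          intro d hd y hy
          rw [(hpe d hd).2] at hy
          rcases Sym2.mem_iff.mp hy with rfl | rfl
          · exact hwmem d (by omega)
          · exact hwmem (d + 1) (by omega)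
        have hpeg : ∀ d, d < k → pe d ≠ g jF := by
          intro d hd hc
          obtain ⟨r, hr, hbr⟩ := hbother jF
          have : b jF ∈ G.ends (pe d) := by rw [hc, hge jF]; exact Sym2.mem_mk_right _ _
          exact hdisj' r jF hr (b jF) hbr (hnews d hd _ this)
        have holdnew : ∀ p q, p < m → ¬ q < m → q < m + (k + 1) →
            (if p < m then ef p else if p < m + k then pe (p - m) else g jF) ≠
            (if q < m then ef q else if q < m + k then pe (q - m) else g jF) := by
          intro p q hp hq hq2 hc
          rw [if_pos hp, if_neg hq] at hc
          rcases i8 p hp with ⟨i, hi1, hi2⟩ | ⟨i, hi1, hi2⟩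
          · -- old edge is a model edge g i with i < j
            by_cases h3 : q < m + k
            · rw [if_pos h3] at hc
              have : a i ∈ G.ends (pe (q - m)) := by
                rw [← hc, hi2, hge i]; exact Sym2.mem_mk_left _ _
              exact hdisj' i jF (by omega) (a i) (ha i) (hnews (q - m) (by omega) _ this)
            · rw [if_neg h3] at hc
              rw [hi2] at hc
              have hij : i = jF := hginj hc
              rw [hij] at hi1
              omega
          · -- old edge is a path edge inside U i with i < j
            by_cases h3 : q < m + k
            · rw [if_pos h3] at hc
              have : w (q - m) ∈ G.ends (ef p) := by
                rw [hc, (hpe (q - m) (by omega)).2]; exact Sym2.mem_mk_left _ _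
              exact hdisj' i jF (by omega) _ (hi2 _ this) (hwmem (q - m) (by omega))
            · rw [if_neg h3] at hc
              have : a jF ∈ G.ends (ef p) := by
                rw [hc, hge jF]; exact Sym2.mem_mk_left _ _
              exact hdisj' i jF (by omega) _ (hi2 _ this) (ha jF)
        intro p q hp hq h
        beta_reduce at h
        by_cases h1 : p < m <;> by_cases h2 : q < m
        · rw [if_pos h1, if_pos h2] at h; exact i7 p q h1 h2 h
        · exact absurd h (holdnew p q h1 h2 hq)
        · exact absurd h.symm (holdnew q p h2 h1 hp)
        · -- both new
          by_cases h3 : p < m + k <;> by_cases h4 : q < m + k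
          · rw [if_neg h1, if_pos h3, if_neg h2, if_pos h4] at h
            have e1 := (hpe (p - m) (by omega)).2
            have e2 := (hpe (q - m) (by omega)).2
            rw [h] at e1
            rcases Sym2.eq_iff.mp (e1.symm.trans e2) with ⟨ha1, ha2⟩ | ⟨ha1, ha2⟩
            · have := hwinj (p - m) (q - m) (by omega) (by omega) ha1
              omega
            · have := hwinj (p - m) (q - m + 1) (by omega) (by omega) ha1
              have := hwinj (p - m + 1) (q - m) (by omega) (by omega) ha2
              omega
          · rw [if_neg h1, if_pos h3, if_neg h2, if_neg h4] at h
            exact absurd h (hpeg (p - m) (by omega))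
          · rw [if_neg h1, if_neg h3, if_neg h2, if_pos h4] at h
            exact absurd h.symm (hpeg (q - m) (by omega))
          · omega
      · -- edge classification
        intro p hp
        have hjFlt : jF.1 < j + 1 := by rw [hjF]; exact Nat.lt_succ_self j
        by_cases h1 : p < m
        · rcases i8 p h1 with ⟨i, hi1, hi2⟩ | ⟨i, hi1, hi2⟩
          · exact Or.inl ⟨i, by omega, by beta_reduce; rw [if_pos h1]; exact hi2⟩
          · exact Or.inr ⟨i, by omega, by beta_reduce; rw [if_pos h1]; exact hi2⟩
        · by_cases h3 : p < m + k
          · refine Or.inr ⟨jF, hjFlt, ?_⟩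
            beta_reduce
            rw [if_neg h1, if_pos h3]
            intro y hy
            rw [(hpe (p - m) (by omega)).2] at hy
            rcases Sym2.mem_iff.mp hy with rfl | rfl
            · exact hwmem (p - m) (by omega)
            · exact hwmem (p - m + 1) (by omega)
          · exact Or.inl ⟨jF, hjFlt, by beta_reduce; rw [if_neg h1, if_neg h3]⟩
      · -- parity
        beta_reduce
        rw [sum_range_split]
        have hold : (∑ p ∈ Finset.range m,
            γ' (if p < m then ef p else if p < m + k then pe (p - m) else g jF))
            = ∑ p ∈ Finset.range m, γ' (ef p) := by
          apply Finset.sum_congr rfl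
          intro p hp
          rw [Finset.mem_range] at hp
          rw [if_pos hp]
        have hnew : (∑ p ∈ Finset.range (k + 1),
            γ' (if m + p < m then ef (m + p) else if m + p < m + k then pe (m + p - m) else g jF))
            = γ' (g jF) := by
          rw [Finset.sum_range_succ]
          have hz : (∑ p ∈ Finset.range k,
              γ' (if m + p < m then ef (m + p) else if m + p < m + k then pe (m + p - m) else g jF)) = 0 := by
            apply Finset.sum_eq_zero
            intro p hp
            rw [Finset.mem_range] at hp
            rw [if_neg (by omega), if_pos (by omega), show m + p - m = p from by omega]
            exact (hpe p hp).1
          rw [hz, zero_add, if_neg (by omega), if_neg (by omega)]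
        rw [hold, hnew, i9]
        have hins : Finset.univ.filter (fun i : Fin n => i.1 < j + 1)
            = insert jF (Finset.univ.filter (fun i : Fin n => i.1 < j)) := by
          ext i
          simp only [Finset.mem_filter, Finset.mem_univ, true_and, Finset.mem_insert]
          constructor
          · intro hi
            by_cases h' : i.1 < j
            · exact Or.inr h'
            · exact Or.inl (Fin.ext (by omega))
          · rintro (rfl | hi)
            · omega
            · omega
        rw [hins, Finset.sum_insert (by
          simp only [Finset.mem_filter, Finset.mem_univ, true_and]
          omega)]
        ring
      · -- all model endpoints hit
        intro i hi
        by_cases h1 : i.1 < j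
        · obtain ⟨p, hp1, hp2⟩ := i10 i h1
          exact ⟨p, by omega, by beta_reduce; rw [if_pos hp1]; exact hp2⟩
        · have : i = jF := Fin.ext (by omega)
          subst this
          exact ⟨m + k, by omega, by
            beta_reduce
            rw [if_neg (by omega : ¬ m + k < m), show m + k - m = k from by omega]
            exact hwk⟩
  obtain ⟨m, vf, ef, i1, i2, i3, i4, i5, i6, i7, i8, i9, i10⟩ := REC n (by omega) le_rfl
  refine ⟨⟨m, by omega, fun p => vf p.1, fun p => ef p.1,
    fun p q h => Fin.ext (i6 p.1 q.1 p.2 q.2 h),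
    fun p q h => Fin.ext (i7 p.1 q.1 p.2 q.2 h), ?_⟩, ?_, ?_, ?_⟩
  · intro p
    show G.ends (ef p.1) = s(vf p.1, vf ((p.1 + 1) % m))
    by_cases h1 : p.1 + 1 < m
    · rw [Nat.mod_eq_of_lt h1]
      exact i3 p.1 h1
    · have hp1 : p.1 = m - 1 := by have := p.2; omega
      have hmod : ((p.1 + 1) % m) = 0 := by
        rw [show p.1 + 1 = m from by omega, Nat.mod_self]
      rw [hmod, hp1]
      have h9 : n - 1 < n := by omega
      have i2' : vf 0 = b ⟨n - 1, h9⟩ := i2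
      rw [i4 h9, i2']
  · rintro x ⟨p, rfl⟩
    obtain ⟨i, _, hi⟩ := i5 p.1 p.2
    exact ⟨i, hi⟩
  · intro i
    obtain ⟨p, hp1, hp2⟩ := i10 i i.2
    exact ⟨⟨p, hp1⟩, hp2⟩
  · show (∑ p : Fin m, γ' (ef p.1)) = _
    rw [Fin.sum_univ_eq_sum_range (fun p => γ' (ef p)) m, i9,
      Finset.filter_true_of_mem (fun i _ => i.2)]
/-! ### Parity invariance under shifting -/

lemma parity_shift {G : MGraph} {γ γ'' : G.E → ZMod 2} (hs : IsShift G γ γ'') (D : G.Cycle) :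
    D.parity γ = D.parity γ'' := by
  obtain ⟨σ, hσ⟩ := hs
  have hkey : ∀ i : Fin D.n, γ (D.edge i)
      = γ'' (D.edge i)
        + (σ (D.vtx i) + σ (D.vtx ⟨(i.1 + 1) % D.n, Nat.mod_lt _ D.npos⟩)) := by
    intro i
    have h := hσ (D.edge i) _ _ (D.ends_eq i)
    have habc : ∀ A B C : ZMod 2, (A + B + C) + (B + C) = A := by decide
    rw [h]
    rw [show γ (D.edge i) + σ (D.vtx i) + σ (D.vtx ⟨(i.1 + 1) % D.n, Nat.mod_lt _ D.npos⟩)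
        + (σ (D.vtx i) + σ (D.vtx ⟨(i.1 + 1) % D.n, Nat.mod_lt _ D.npos⟩)) = γ (D.edge i)
      from habc _ _ _]
  show (∑ i, γ (D.edge i)) = ∑ i, γ'' (D.edge i)
  rw [Finset.sum_congr rfl (fun i _ => hkey i), Finset.sum_add_distrib,
    Finset.sum_add_distrib]
  have hbij : Function.Bijective
      (fun i : Fin D.n => (⟨(i.1 + 1) % D.n, Nat.mod_lt _ D.npos⟩ : Fin D.n)) := by
    apply Finite.injective_iff_bijective.mp
    intro i j hij
    have h := congrArg Fin.val hij
    simp only [] at h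
    apply Fin.ext
    have hi2 := i.2
    have hj2 := j.2
    rcases Nat.lt_or_ge (i.1 + 1) D.n with h1 | h1 <;>
      rcases Nat.lt_or_ge (j.1 + 1) D.n with h2 | h2
    · rw [Nat.mod_eq_of_lt h1, Nat.mod_eq_of_lt h2] at h; omega
    · rw [Nat.mod_eq_of_lt h1, show j.1 + 1 = D.n from by omega, Nat.mod_self] at h; omega
    · rw [Nat.mod_eq_of_lt h2, show i.1 + 1 = D.n from by omega, Nat.mod_self] at h; omega
    · omega
  have hre : (∑ i : Fin D.n, σ (D.vtx ⟨(i.1 + 1) % D.n, Nat.mod_lt _ D.npos⟩))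
      = ∑ i : Fin D.n, σ (D.vtx i) :=
    hbij.sum_comp (fun i => σ (D.vtx i))
  rw [hre]
  have h2 : ∀ x : ZMod 2, x + x = 0 := by decide
  rw [h2, add_zero]

/-- Lift a cycle of `G` whose support lies in `S` to the induced subgraph. -/
def liftCycle {G : MGraph} {S : Set G.V} (D : G.Cycle) (h : Set.range D.vtx ⊆ S) :
    (G.induce S).Cycle where
  n := D.n
  npos := D.npos
  vtx := D.vtx
  edge := fun i => ⟨D.edge i, by
    intro v hv
    rw [D.ends_eq i] at hv
    rcases Sym2.mem_iff.mp hv with rfl | rfl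
    · exact h ⟨i, rfl⟩
    · exact h ⟨_, rfl⟩⟩
  vtx_inj := D.vtx_inj
  edge_inj := fun i j hij => D.edge_inj (congrArg Subtype.val hij)
  ends_eq := D.ends_eq

/-! ### Bounds on packing numbers -/

lemma packing_zero_mem (G : MGraph) (γ : G.E → ZMod 2) :
    0 ∈ {k : ℕ | ∃ C : Fin k → G.Cycle, (∀ i, (C i).parity γ = 1) ∧
      ∀ i j, i ≠ j → Disjoint ((C i).support) ((C j).support)} :=
  ⟨fun i => i.elim0, fun i => i.elim0, fun i => i.elim0⟩

lemma packing_le (G : MGraph) (γ : G.E → ZMod 2) {k : ℕ}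
    (hk : k ∈ {k : ℕ | ∃ C : Fin k → G.Cycle, (∀ i, (C i).parity γ = 1) ∧
      ∀ i j, i ≠ j → Disjoint ((C i).support) ((C j).support)}) :
    k ≤ Nat.card G.V := by
  obtain ⟨C, -, hdisj⟩ := hk
  have hinj : Function.Injective (fun i : Fin k => (C i).vtx ⟨0, (C i).npos⟩) := by
    intro i j hij
    by_contra hne
    have h1 : (C i).vtx ⟨0, (C i).npos⟩ ∈ (C i).support := ⟨⟨0, (C i).npos⟩, rfl⟩
    have h2 : (C i).vtx ⟨0, (C i).npos⟩ ∈ (C j).support := by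
      have h3 : (C i).vtx ⟨0, (C i).npos⟩ = (C j).vtx ⟨0, (C j).npos⟩ := hij
      rw [h3]; exact ⟨⟨0, (C j).npos⟩, rfl⟩
    exact Set.disjoint_left.mp (hdisj i j hne) h1 h2
  have := Nat.card_le_card_of_injective _ hinj
  simpa using this

lemma OCP_le_card (G : MGraph) (γ : G.E → ZMod 2) : G.OCP γ ≤ Nat.card G.V := by
  unfold MGraph.OCP
  exact csSup_le ⟨0, packing_zero_mem G γ⟩ (fun _ hk => packing_le G γ hk)

/-! ### Transferring packings through a signed minor model -/

lemma OCPOn_transfer {H G : MGraph} {γH : H.E → ZMod 2} {γG : G.E → ZMod 2}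
    (M : SignedMinorModel H G γH γG) (D : TameOCPDecomp G γG) (t : D.ι) :
    H.OCPOn γH ({v | (M.bs v ∩ D.bag t).Nonempty} \ {v | (M.bs v ∩ D.prot t).Nonempty})
      ≤ G.OCPOn γG (D.bag t \ D.prot t) := by
  set SH : Set H.V :=
    {v | (M.bs v ∩ D.bag t).Nonempty} \ {v | (M.bs v ∩ D.prot t).Nonempty} with hSH
  set SG : Set G.V := D.bag t \ D.prot t with hSG
  show (H.induce SH).OCP _ ≤ (G.induce SG).OCP _
  unfold MGraph.OCP
  apply csSup_le_csSup
  case ht => exact ⟨Nat.card G.V, fun k hk => packing_le (G.induce SG) _ hk⟩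
  case hs => exact ⟨0, packing_zero_mem _ _⟩
  rintro k ⟨C, hodd, hdisj⟩
  have key : ∀ i0 : Fin k, ∃ Dc : (G.induce SG).Cycle,
      Dc.parity (fun e => γG e.1) = 1 ∧
      Set.range Dc.vtx ⊆ ⋃ p : Fin (C i0).n, M.bs ((C i0).vtx p) := by
    intro i0
    set C0 := C i0 with hC0
    have hn2 := cycle_two_le C0
    have hvS : ∀ p : Fin C0.n, C0.vtx p ∈ SH := by
      intro p
      refine (C0.edge p).2 (C0.vtx p) ?_
      rw [show H.ends (C0.edge p).1 = s(C0.vtx p,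
        C0.vtx ⟨(p.1 + 1) % C0.n, Nat.mod_lt _ C0.npos⟩) from C0.ends_eq p]
      exact Sym2.mem_mk_left _ _
    set U : Fin C0.n → Set G.V := fun p => M.bs (C0.vtx p) with hU
    have hdisjU : ∀ p q : Fin C0.n, p ≠ q → Disjoint (U p) (U q) :=
      fun p q hpq => M.bs_disjoint _ _ (fun h => hpq (C0.vtx_inj h))
    have hconnU : ∀ p : Fin C0.n, ∀ x ∈ U p, ∀ y ∈ U p,
        Relation.ReflTransGen
          (fun x y => x ∈ U p ∧ y ∈ U p ∧ ∃ e, M.γ' e = 0 ∧ G.ends e = s(x, y)) x y :=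
      fun p x hx y hy => M.bs_connected _ x hx y hy
    have he0inj : Function.Injective (fun p : Fin C0.n => (C0.edge p).1) :=
      fun p q h => C0.edge_inj (Subtype.ext h)
    have hem : ∀ p : Fin C0.n, ∃ x, x ∈ M.bs (C0.vtx p) ∧ ∃ y,
        y ∈ M.bs (C0.vtx ⟨(p.1 + 1) % C0.n, Nat.mod_lt _ C0.npos⟩) ∧
        G.ends (M.em (C0.edge p).1) = s(x, y) :=
      fun p => M.em_ends _ _ _ (C0.ends_eq p)
    choose av hav bv hbv hgev using hem
    have hginj : Function.Injective (fun p : Fin C0.n => M.em (C0.edge p).1) :=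
      fun p q h => he0inj (M.em_inj h)
    obtain ⟨Dc0, hsub, hax, hpar⟩ := exists_expansion G M.γ' hn2 U hdisjU hconnU
      (fun p => M.em (C0.edge p).1) hginj av bv hav hbv hgev
    -- parity
    have hpar1 : Dc0.parity γG = 1 := by
      rw [parity_shift M.shift Dc0, hpar]
      have : (∑ p : Fin C0.n, M.γ' (M.em (C0.edge p).1))
          = ∑ p : Fin C0.n, γH (C0.edge p).1 :=
        Finset.sum_congr rfl (fun p _ => M.em_parity _)
      rw [this]
      exact hodd i0
    -- structural containment
    have hUbag : ∀ p, (U p ∩ D.bag t).Nonempty := fun p => (hvS p).1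
    have hUprot : ∀ p, U p ∩ D.prot t = ∅ :=
      fun p => Set.not_nonempty_iff_eq_empty.mp (hvS p).2
    have hbag : Set.range Dc0.vtx ⊆ D.bag t := by
      apply support_in_bag D.toTreeDecomp t (D.prot t) (fun t' h => D.prot_adh t t' h)
        Dc0 hn2 U hdisjU
        (fun p x hx y hy => Relation.ReflTransGen.mono
          (fun a b hab => ⟨hab.1, hab.2.1, hab.2.2.choose, hab.2.2.choose_spec.2⟩) _ _
          (hconnU p x hx y hy))
        hUbag hUprot hsub (fun p => ⟨av p, hav p, hax p⟩)
    have hSGsub : Set.range Dc0.vtx ⊆ SG := by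
      intro x hx
      refine ⟨hbag hx, ?_⟩
      obtain ⟨p, hp⟩ := hsub x hx
      intro hxP
      exact Set.eq_empty_iff_forall_notMem.mp (hUprot p) x ⟨hp, hxP⟩
    refine ⟨liftCycle Dc0 hSGsub, ?_, ?_⟩
    · show (∑ i : Fin Dc0.n, γG (Dc0.edge i)) = 1
      exact hpar1
    · intro x hx
      obtain ⟨p, hp⟩ := hsub x hx
      exact Set.mem_iUnion.mpr ⟨p, hp⟩
  choose Dc hDc1 hDc2 using key
  refine ⟨Dc, hDc1, ?_⟩
  intro i j hij
  rw [Set.disjoint_left]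
  intro x hxi hxj
  obtain ⟨p, hp⟩ := Set.mem_iUnion.mp (hDc2 i hxi)
  obtain ⟨q, hq⟩ := Set.mem_iUnion.mp (hDc2 j hxj)
  have hvw : (C i).vtx p ≠ (C j).vtx q := by
    intro h
    exact Set.disjoint_left.mp (hdisj i j hij) ⟨p, rfl⟩ (h ▸ ⟨q, rfl⟩)
  exact Set.disjoint_left.mp (M.bs_disjoint _ _ hvw) hp hq
/-! ### Pushing a tame decomposition through a signed minor model -/

lemma induce_reach_mono {ι : Type} (T : SimpleGraph ι) {S₁ S₂ : Set ι} (h : S₁ ⊆ S₂)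
    (x y : ι) (hx : x ∈ S₁) (hy : y ∈ S₁)
    (hr : (T.induce S₁).Reachable ⟨x, hx⟩ ⟨y, hy⟩) :
    (T.induce S₂).Reachable ⟨x, h hx⟩ ⟨y, h hy⟩ := by
  obtain ⟨w⟩ := hr
  exact ⟨(w.map (T.induceHomOfLE h).toHom).copy rfl rfl⟩

lemma push_bag_connected {H G : MGraph} {γH : H.E → ZMod 2} {γG : G.E → ZMod 2}
    (M : SignedMinorModel H G γH γG) (D : TameOCPDecomp G γG) (v : H.V) :
    (D.tree.induce {r | (M.bs v ∩ D.bag r).Nonempty}).Connected := by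
  set S : Set D.ι := {r | (M.bs v ∩ D.bag r).Nonempty} with hS
  obtain ⟨x₀, hx₀⟩ := M.bs_nonempty v
  obtain ⟨r₀, hr₀⟩ := D.covers_vertex x₀
  have hr₀S : r₀ ∈ S := ⟨x₀, hx₀, hr₀⟩
  have main : ∀ (x : G.V), Relation.ReflTransGen (stepIn G (M.bs v)) x x₀ →
      ∀ (r : D.ι), x ∈ D.bag r → ∀ (hrS : r ∈ S),
      (D.tree.induce S).Reachable ⟨r, hrS⟩ ⟨r₀, hr₀S⟩ := by
    intro x hch
    induction hch using Relation.ReflTransGen.head_induction_on with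
    | refl =>
      intro r hr hrS
      have hsub : {r' | x₀ ∈ D.bag r'} ⊆ S := fun r' hr' => ⟨x₀, hx₀, hr'⟩
      exact induce_reach_mono D.tree hsub r r₀ hr hr₀
        ((D.bag_connected x₀).preconnected ⟨r, hr⟩ ⟨r₀, hr₀⟩)
    | @head x c hxc hcq ih =>
      intro r hr hrS
      obtain ⟨hxbs, hcbs, e, he⟩ := hxc
      obtain ⟨r', hr'⟩ := D.covers_edge e
      have hx' : x ∈ D.bag r' := hr' x (by rw [he]; exact Sym2.mem_mk_left _ _)
      have hc' : c ∈ D.bag r' := hr' c (by rw [he]; exact Sym2.mem_mk_right _ _)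
      have hr'S : r' ∈ S := ⟨x, hxbs, hx'⟩
      have hsub : {r'' | x ∈ D.bag r''} ⊆ S := fun r'' hr'' => ⟨x, hxbs, hr''⟩
      have leg1 : (D.tree.induce S).Reachable ⟨r, hrS⟩ ⟨r', hr'S⟩ :=
        induce_reach_mono D.tree hsub r r' hr hx'
          ((D.bag_connected x).preconnected ⟨r, hr⟩ ⟨r', hx'⟩)
      exact leg1.trans (ih r' hc' hr'S)
  haveI : Nonempty {r : D.ι // r ∈ S} := ⟨⟨r₀, hr₀S⟩⟩
  refine ⟨?_⟩
  rintro ⟨r₁, h₁⟩ ⟨r₂, h₂⟩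
  obtain ⟨x₁, hx₁bs, hx₁bag⟩ := h₁
  obtain ⟨x₂, hx₂bs, hx₂bag⟩ := h₂
  have hch1 : Relation.ReflTransGen (stepIn G (M.bs v)) x₁ x₀ :=
    Relation.ReflTransGen.mono
      (fun a b hab => ⟨hab.1, hab.2.1, hab.2.2.choose, hab.2.2.choose_spec.2⟩) _ _
      (M.bs_connected v x₁ hx₁bs x₀ hx₀)
  have hch2 : Relation.ReflTransGen (stepIn G (M.bs v)) x₂ x₀ :=
    Relation.ReflTransGen.mono
      (fun a b hab => ⟨hab.1, hab.2.1, hab.2.2.choose, hab.2.2.choose_spec.2⟩) _ _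
      (M.bs_connected v x₂ hx₂bs x₀ hx₀)
  exact (main x₁ hch1 r₁ hx₁bag ⟨x₁, hx₁bs, hx₁bag⟩).trans
    (main x₂ hch2 r₂ hx₂bag ⟨x₂, hx₂bs, hx₂bag⟩).symm

/-- The decomposition of the minor induced by a tame decomposition of the host. -/
noncomputable def pushDecomp {H G : MGraph} {γH : H.E → ZMod 2} {γG : G.E → ZMod 2}
    (M : SignedMinorModel H G γH γG) (D : TameOCPDecomp G γG) : TameOCPDecomp H γH where
  ι := D.ι
  tree := D.tree
  isTree := D.isTree
  bag := fun r => {v | (M.bs v ∩ D.bag r).Nonempty}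
  covers_vertex := by
    intro v
    obtain ⟨x, hx⟩ := M.bs_nonempty v
    obtain ⟨r, hr⟩ := D.covers_vertex x
    exact ⟨r, x, hx, hr⟩
  covers_edge := by
    intro e
    obtain ⟨x, hx, y, hy, hexy⟩ := M.em_ends e (H.ep1 e) (H.ep2 e) (H.ends_ep e)
    obtain ⟨r, hr⟩ := D.covers_edge (M.em e)
    refine ⟨r, ?_⟩
    intro w hw
    rw [H.ends_ep e] at hw
    rcases Sym2.mem_iff.mp hw with rfl | rfl
    · exact ⟨x, hx, hr x (by rw [hexy]; exact Sym2.mem_mk_left _ _)⟩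
    · exact ⟨y, hy, hr y (by rw [hexy]; exact Sym2.mem_mk_right _ _)⟩
  bag_connected := push_bag_connected M D
  prot := fun r => {v | (M.bs v ∩ D.prot r).Nonempty}
  prot_sub := by
    rintro r v ⟨x, hx1, hx2⟩
    exact ⟨x, hx1, D.prot_sub r hx2⟩
  prot_adh := by
    intro r r' hadj
    rw [Set.ncard_le_one_iff (Set.toFinite _)]
    rintro v w ⟨⟨hv1, hv2⟩, hv3⟩ ⟨⟨hw1, hw2⟩, hw3⟩
    simp only [Set.mem_setOf_eq] at hv1 hv2 hw1 hw2 hv3 hw3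
    have hget : ∀ u : H.V, (M.bs u ∩ D.bag r).Nonempty → (M.bs u ∩ D.bag r').Nonempty →
        ¬(M.bs u ∩ D.prot r).Nonempty →
        ∃ y, y ∈ M.bs u ∧ y ∈ (D.bag r ∩ D.bag r') \ D.prot r := by
      rintro u ⟨p, hpbs, hpbag⟩ ⟨q, hqbs, hqbag⟩ hup
      have hch : Relation.ReflTransGen (stepIn G (M.bs u)) p q :=
        Relation.ReflTransGen.mono
          (fun a b hab => ⟨hab.1, hab.2.1, hab.2.2.choose, hab.2.2.choose_spec.2⟩) _ _
          (M.bs_connected u p hpbs q hqbs)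
      obtain ⟨y, hyU, hyt, hys⟩ := chain_meets_sep D.toTreeDecomp hadj hch hpbs
        ⟨r, side_self _ _ _, hpbag⟩ ⟨r', side_self _ _ _, hqbag⟩
      exact ⟨y, hyU, ⟨⟨hyt, hys⟩, fun hyP => hup ⟨y, hyU, hyP⟩⟩⟩
    obtain ⟨yv, hyv1, hyv2⟩ := hget v hv1 hv2 hv3
    obtain ⟨yw, hyw1, hyw2⟩ := hget w hw1 hw2 hw3
    have hy : yv = yw :=
      (Set.ncard_le_one_iff (Set.toFinite _)).mp (D.prot_adh r r' hadj) hyv2 hyw2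
    by_contra hne
    exact Set.disjoint_left.mp (M.bs_disjoint v w hne) hyv1 (hy ▸ hyw1)

lemma ncard_push_prot_le {H G : MGraph} {γH : H.E → ZMod 2} {γG : G.E → ZMod 2}
    (M : SignedMinorModel H G γH γG) (D : TameOCPDecomp G γG) (t : D.ι) :
    {v | (M.bs v ∩ D.prot t).Nonempty}.ncard ≤ (D.prot t).ncard := by
  classical
  rcases Set.eq_empty_or_nonempty {v | (M.bs v ∩ D.prot t).Nonempty} with h | ⟨v0, hv0⟩
  · simp [h]
  have hv0' : (M.bs v0 ∩ D.prot t).Nonempty := hv0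
  apply Set.ncard_le_ncard_of_injOn
    (fun v => if h : (M.bs v ∩ D.prot t).Nonempty then h.choose else hv0'.choose)
  · intro v hv
    have hv' : (M.bs v ∩ D.prot t).Nonempty := hv
    simp only [dif_pos hv']
    exact hv'.choose_spec.2
  · intro v hv w hw heq
    have hv' : (M.bs v ∩ D.prot t).Nonempty := hv
    have hw' : (M.bs w ∩ D.prot t).Nonempty := hw
    simp only [dif_pos hv', dif_pos hw'] at heq
    by_contra hne
    exact Set.disjoint_left.mp (M.bs_disjoint v w hne) hv'.choose_spec.1
      (heq ▸ hw'.choose_spec.1)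

lemma twidth_push_le {H G : MGraph} {γH : H.E → ZMod 2} {γG : G.E → ZMod 2}
    (M : SignedMinorModel H G γH γG) (D : TameOCPDecomp G γG) :
    (pushDecomp M D).twidth ≤ D.twidth := by
  haveI : Nonempty D.ι := D.isTree.isConnected.nonempty
  show (⨆ t : D.ι, _) ≤ (⨆ t : D.ι, _)
  apply ciSup_le
  intro t
  have hnode : ((pushDecomp M D).prot t).ncard
      + H.OCPOn γH ((pushDecomp M D).bag t \ (pushDecomp M D).prot t)
      ≤ (D.prot t).ncard + G.OCPOn γG (D.bag t \ D.prot t) :=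
    add_le_add (ncard_push_prot_le M D t) (OCPOn_transfer M D t)
  have hbdd : BddAbove (Set.range fun r : D.ι =>
      (D.prot r).ncard + G.OCPOn γG (D.bag r \ D.prot r)) := by
    refine ⟨Nat.card G.V + Nat.card G.V, ?_⟩
    rintro x ⟨r, rfl⟩
    refine add_le_add ?_ (OCP_le_card (G.induce _) _)
    exact (Set.ncard_le_ncard (Set.subset_univ _) Set.finite_univ).trans
      (le_of_eq (Set.ncard_univ _))
  exact hnode.trans (le_ciSup hbdd t)

/-- The one-bag decomposition, used to show the defining set is nonempty. -/
noncomputable def trivialDecomp (G : MGraph) (γ : G.E → ZMod 2) : TameOCPDecomp G γ where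
  ι := PUnit
  tree := ⊥
  isTree := ⟨⟨fun a b => by cases a; cases b; exact SimpleGraph.Reachable.refl _⟩,
    SimpleGraph.isAcyclic_bot⟩
  bag := fun _ => Set.univ
  covers_vertex := fun v => ⟨PUnit.unit, trivial⟩
  covers_edge := fun e => ⟨PUnit.unit, fun v _ => trivial⟩
  bag_connected := by
    intro v
    haveI : Nonempty {t : PUnit // t ∈ {t | v ∈ (fun _ => Set.univ) t}} :=
      ⟨⟨PUnit.unit, trivial⟩⟩
    refine ⟨?_⟩
    intro a b
    have hab : a = b := Subsingleton.elim a b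
    rw [hab]
  prot := fun _ => ∅
  prot_sub := fun t => Set.empty_subset _
  prot_adh := fun t t' hadj => by simp at hadj

/-- Tame OCP-treewidth is monotone under signed graph minors. -/
theorem statement_12 (H : MGraph) (γH : H.E → ZMod 2) (G : MGraph)
    (γG : G.E → ZMod 2) (h : IsSignedMinor H γH G γG) :
    tOCPtw H γH ≤ tOCPtw G γG := by
  obtain ⟨M⟩ := h
  have hne : {w | ∃ D : TameOCPDecomp G γG, D.twidth = w}.Nonempty :=
    ⟨(trivialDecomp G γG).twidth, trivialDecomp G γG, rfl⟩
  obtain ⟨D, hD⟩ := Nat.sInf_mem hne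
  calc tOCPtw H γH ≤ (pushDecomp M D).twidth := Nat.sInf_le ⟨pushDecomp M D, rfl⟩
    _ ≤ D.twidth := twidth_push_le M D
    _ = tOCPtw G γG := hD

end TDMPaper
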